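/- Let u be C² on ℝ^{2C}_{++} and U(x₀,…,x_S) = Σ_{s=1}^S a_s u(x₀,x_s) with a_s ∈ (0,1), Σ a_s = 1. If U satisfies the weak concavity condition (for every nonzero v ∈ ℝ^{C(S+1)} and x ∈ ℝ^{C(S+1)}_{++}, DU(x)·v = 0 implies v·D²U(x)·v < 0), then u satisfies the analogous condition: for every nonzero w ∈ ℝ^{2C} and (x,y) ∈ ℝ^{2C}_{++}, Du(x,y)·w = 0 implies w·D²u(x,y)·w < 0. -/

import Mathlib

/-- Second derivative quadratic form of `f` on the set `s`: v ↦ v·D²f(x)·v. -/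
noncomputable def hessQF {E : Type*} [NormedAddCommGroup E] [NormedSpace ℝ E]
    (f : E → ℝ) (s : Set E) (x v : E) : ℝ :=
  fderivWithin ℝ (fun y => fderivWithin ℝ f s y v) s x v

/-- If U(x₀,…,x_S) = ∑ₛ aₛ u(x₀,x_s) satisfies the weak concavity
condition (DU(x)·v = 0 ⟹ v·D²U(x)·v < 0 for nonzero v), then u satisfies the
analogous condition on ℝ^{2C}_{++}. -/
theorem stmt12 (C S : ℕ) (hC : 1 ≤ C) (hS : 1 ≤ S)
    (a : Fin S → ℝ) (ha : ∀ s, a s ∈ Set.Ioo (0:ℝ) 1) (hsum : ∑ s, a s = 1)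
    (u : ((Fin C → ℝ) × (Fin C → ℝ)) → ℝ)
    (P2 : Set ((Fin C → ℝ) × (Fin C → ℝ)))
    (hP2 : P2 = {p | (∀ i, 0 < p.1 i) ∧ (∀ i, 0 < p.2 i)})
    (PG : Set (Fin (S+1) → (Fin C → ℝ)))
    (hPG : PG = {x | ∀ k i, 0 < x k i})
    (U : (Fin (S+1) → (Fin C → ℝ)) → ℝ)
    (hU : ∀ x, U x = ∑ s : Fin S, a s * u (x 0, x s.succ))
    (hu : ContDiffOn ℝ 2 u P2)
    (hweakU : ∀ v : Fin (S+1) → (Fin C → ℝ), v ≠ 0 → ∀ x ∈ PG,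
      fderivWithin ℝ U PG x v = 0 → hessQF U PG x v < 0) :
    ∀ w : (Fin C → ℝ) × (Fin C → ℝ), w ≠ 0 → ∀ p ∈ P2,
      fderivWithin ℝ u P2 p w = 0 → hessQF u P2 p w < 0 := by
  intro w hw p hp hgrad
  -- openness
  have openA : IsOpen {z : Fin C → ℝ | ∀ i, 0 < z i} := by
    have h : {z : Fin C → ℝ | ∀ i, 0 < z i}
        = Set.pi Set.univ (fun _ => Set.Ioi (0:ℝ)) := by
      ext z; simp [Set.mem_pi]
    rw [h]
    exact isOpen_set_pi Set.finite_univ fun _ _ => isOpen_Ioi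
  have open2 : IsOpen P2 := by
    rw [hP2]
    exact (openA.preimage continuous_fst).inter (openA.preimage continuous_snd)
  have openG : IsOpen PG := by
    rw [hPG]
    have h : {x : Fin (S+1) → (Fin C → ℝ) | ∀ k i, 0 < x k i}
        = Set.pi Set.univ (fun _ => {z : Fin C → ℝ | ∀ i, 0 < z i}) := by
      ext z; simp [Set.mem_pi]
    rw [h]
    exact isOpen_set_pi Set.finite_univ fun _ _ => openA
  -- the linear maps
  set φ : Fin S → ((Fin (S+1) → (Fin C → ℝ)) →L[ℝ] ((Fin C → ℝ) × (Fin C → ℝ))) :=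
    fun s => (ContinuousLinearMap.proj 0).prod (ContinuousLinearMap.proj s.succ) with hφ
  have hφapp : ∀ s (z : Fin (S+1) → (Fin C → ℝ)), φ s z = (z 0, z s.succ) := by
    intro s z; rfl
  set x : Fin (S+1) → (Fin C → ℝ) := fun k => if k = 0 then p.1 else p.2 with hxdef
  set v : Fin (S+1) → (Fin C → ℝ) := fun k => if k = 0 then w.1 else w.2 with hvdef
  have hx0 : x 0 = p.1 := if_pos rfl
  have hxs : ∀ s : Fin S, x s.succ = p.2 := fun s => if_neg (Fin.succ_ne_zero s)
  have hφx : ∀ s, φ s x = p := by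
    intro s; rw [hφapp, hx0, hxs]
  have hφv : ∀ s, φ s v = w := by
    intro s; rw [hφapp]
    have h0 : v 0 = w.1 := if_pos rfl
    have hs : v s.succ = w.2 := if_neg (Fin.succ_ne_zero s)
    rw [h0, hs]
  have hxPG : x ∈ PG := by
    rw [hPG]
    intro k i
    by_cases hk : k = 0 <;> simp [hxdef, hk]
    · exact (hP2 ▸ hp).1 i
    · exact (hP2 ▸ hp).2 i
  have hvne : v ≠ 0 := by
    intro hv
    apply hw
    have h1 : v 0 = 0 := congrFun hv 0
    have h2 : v (⟨0, hS⟩ : Fin S).succ = 0 := congrFun hv _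
    rw [show v 0 = w.1 from if_pos rfl] at h1
    rw [show v (⟨0, hS⟩ : Fin S).succ = w.2 from if_neg (Fin.succ_ne_zero _)] at h2
    exact Prod.ext h1 h2
  -- differentiability of u
  have hud : ∀ q ∈ P2, ContDiffAt ℝ 2 u q := fun q hq => hu.contDiffAt (open2.mem_nhds hq)
  have hdi : ∀ q ∈ P2, DifferentiableAt ℝ u q := fun q hq =>
    (hud q hq).differentiableAt (by norm_num)
  -- second derivative data at p
  set D2 : ((Fin C → ℝ) × (Fin C → ℝ)) →L[ℝ]
      (((Fin C → ℝ) × (Fin C → ℝ)) →L[ℝ] ℝ) := fderiv ℝ (fderiv ℝ u) p with hD2def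
  have hD2 : HasFDerivAt (fderiv ℝ u) D2 p := by
    have h1 : ContDiffAt ℝ 1 (fderiv ℝ u) p := (hud p hp).fderiv_right (by norm_num)
    exact (h1.differentiableAt (by norm_num)).hasFDerivAt
  set Dw : ((Fin C → ℝ) × (Fin C → ℝ)) →L[ℝ] ℝ :=
    (ContinuousLinearMap.apply ℝ ℝ w).comp D2 with hDwdef
  have hDw : HasFDerivAt (fun q => fderiv ℝ u q w) Dw p :=
    (ContinuousLinearMap.apply ℝ ℝ w).hasFDerivAt.comp p hD2
  -- membership of lifted points
  have hmemφ : ∀ (s : Fin S) (y : Fin (S+1) → (Fin C → ℝ)), y ∈ PG → φ s y ∈ P2 := by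
    intro s y hy
    rw [hP2]
    rw [hPG] at hy
    exact ⟨fun i => hy 0 i, fun i => hy s.succ i⟩
  -- derivative of U at points of PG
  have hUfun : U = fun z => ∑ s : Fin S, a s * u (φ s z) := by
    funext z; rw [hU]; simp only [hφapp]
  have hUy : ∀ y ∈ PG, HasFDerivAt U
      (∑ s : Fin S, a s • ((fderiv ℝ u (φ s y)).comp (φ s))) y := by
    intro y hy
    rw [hUfun]
    apply HasFDerivAt.fun_sum
    intro s _
    exact (((hdi (φ s y) (hmemφ s y hy)).hasFDerivAt.comp y (φ s).hasFDerivAt).const_mul (a s))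
  have hUyW : ∀ y ∈ PG, fderivWithin ℝ U PG y
      = ∑ s : Fin S, a s • ((fderiv ℝ u (φ s y)).comp (φ s)) := by
    intro y hy
    rw [fderivWithin_of_isOpen openG hy]
    exact (hUy y hy).fderiv
  have hfdWu : fderivWithin ℝ u P2 p w = fderiv ℝ u p w := by
    rw [fderivWithin_of_isOpen open2 hp]
  -- gradient of U at x applied to v
  have hgradU : fderivWithin ℝ U PG x v = 0 := by
    rw [hUyW x hxPG]
    simp only [ContinuousLinearMap.sum_apply, ContinuousLinearMap.smul_apply,
      ContinuousLinearMap.coe_comp', Function.comp_apply, smul_eq_mul, hφx, hφv]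
    rw [← Finset.sum_mul, hsum, one_mul, ← hfdWu, hgrad]
  -- hessian of U
  have hhessU : hessQF U PG x v = D2 w w := by
    unfold hessQF
    have hG : fderivWithin ℝ (fun y => fderivWithin ℝ U PG y v) PG x
        = fderivWithin ℝ (fun y => ∑ s : Fin S, a s * fderiv ℝ u (φ s y) w) PG x := by
      apply fderivWithin_congr
      · intro y hy
        show fderivWithin ℝ U PG y v = _
        rw [hUyW y hy]
        simp only [ContinuousLinearMap.sum_apply, ContinuousLinearMap.smul_apply,
          ContinuousLinearMap.coe_comp', Function.comp_apply, smul_eq_mul, hφv]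
      · rw [hUyW x hxPG]
        simp only [ContinuousLinearMap.sum_apply, ContinuousLinearMap.smul_apply,
          ContinuousLinearMap.coe_comp', Function.comp_apply, smul_eq_mul, hφv]
    rw [hG]
    have hGd : HasFDerivAt (fun y => ∑ s : Fin S, a s * fderiv ℝ u (φ s y) w)
        (∑ s : Fin S, a s • (Dw.comp (φ s))) x := by
      apply HasFDerivAt.fun_sum
      intro s _
      have hDw' : HasFDerivAt (fun q => fderiv ℝ u q w) Dw ((φ s) x) := by
        rw [hφx]; exact hDw
      exact (HasFDerivAt.comp x hDw' (φ s).hasFDerivAt).const_mul (a s)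
    rw [fderivWithin_of_isOpen openG hxPG, hGd.fderiv]
    simp only [ContinuousLinearMap.sum_apply, ContinuousLinearMap.smul_apply,
      ContinuousLinearMap.coe_comp', Function.comp_apply, smul_eq_mul, hφv, hDwdef,
      ContinuousLinearMap.apply_apply]
    rw [← Finset.sum_mul, hsum, one_mul]
  -- hessian of u
  have hhessu : hessQF u P2 p w = D2 w w := by
    unfold hessQF
    have hG : fderivWithin ℝ (fun y => fderivWithin ℝ u P2 y w) P2 p
        = fderivWithin ℝ (fun y => fderiv ℝ u y w) P2 p := by
      apply fderivWithin_congr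
      · intro y hy
        show fderivWithin ℝ u P2 y w = _
        rw [fderivWithin_of_isOpen open2 hy]
      · rw [fderivWithin_of_isOpen open2 hp]
    rw [hG, fderivWithin_of_isOpen open2 hp, hDw.fderiv, hDwdef]
    simp [ContinuousLinearMap.apply_apply]
  rw [hhessu, ← hhessU]
  exact hweakU v hvne x hxPG hgradU
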